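/- Let ρ be a two-qubit separable density matrix and let {A_i = a_i·σ}, {B_j = b_j·σ} be complete sets of complementary observables with the same orientation (a_i, b_j right-handed orthonormal bases of ℝ³). Then ⟨1 + A₃⊗B₃⟩_ρ² − ⟨A₃⊗I + I⊗B₃⟩_ρ² − ⟨A₁⊗B₁ + A₂⊗B₂⟩_ρ² ≥ 0. -/

import Mathlib

open scoped ComplexOrder
open Finset

abbrev Q2 := Fin 2 × Fin 2

noncomputable def pσ : Fin 3 → Matrix (Fin 2) (Fin 2) ℂ :=
  ![!![0, 1; 1, 0], !![0, -Complex.I; Complex.I, 0], !![1, 0; 0, -1]]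

/-- `a · σ` for a real vector `a ∈ ℝ³`. -/
noncomputable def dotSigma (a : Fin 3 → ℝ) : Matrix (Fin 2) (Fin 2) ℂ :=
  ∑ k, a k • pσ k

/-- A right-handed orthonormal basis of ℝ³. -/
def RightHandedONB (a : Fin 3 → Fin 3 → ℝ) : Prop :=
  (∀ i j, (∑ k, a i k * a j k) = if i = j then 1 else 0) ∧
    crossProduct (a 0) (a 1) = a 2

/-- Tensor product operator `X ⊗ Y` on `ℂ² ⊗ ℂ²`. -/
noncomputable def op2 (X Y : Matrix (Fin 2) (Fin 2) ℂ) : Matrix Q2 Q2 ℂ :=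
  Matrix.of fun p q => X p.1 q.1 * Y p.2 q.2

/-- `ρ` is a density matrix. -/
def IsDensity {n : Type*} [Fintype n] [DecidableEq n] (ρ : Matrix n n ℂ) : Prop :=
  ρ.PosSemidef ∧ ρ.trace = 1

/-- `ρ` is a separable two-qubit state. -/
def SepState (ρ : Matrix Q2 Q2 ℂ) : Prop :=
  ∃ (N : ℕ) (p : Fin N → ℝ) (ρ1 ρ2 : Fin N → Matrix (Fin 2) (Fin 2) ℂ),
    (∀ k, 0 ≤ p k) ∧ (∑ k, p k = 1) ∧
    (∀ k, IsDensity (ρ1 k)) ∧ (∀ k, IsDensity (ρ2 k)) ∧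
    ρ = ∑ k, p k • op2 (ρ1 k) (ρ2 k)

/-- Expectation value `tr(ρ X)` (real part). -/
noncomputable def expec (ρ X : Matrix Q2 Q2 ℂ) : ℝ := ((ρ * X).trace).re

/-! ### Auxiliary lemmas -/

lemma op2_mul (A B X Y : Matrix (Fin 2) (Fin 2) ℂ) :
    op2 A B * op2 X Y = op2 (A * X) (B * Y) := by
  ext ⟨p1, p2⟩ ⟨q1, q2⟩
  simp [op2, Matrix.mul_apply, Fintype.sum_prod_type, Finset.sum_mul_sum]
  ring

lemma op2_trace (X Y : Matrix (Fin 2) (Fin 2) ℂ) :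
    (op2 X Y).trace = X.trace * Y.trace := by
  simp [op2, Matrix.trace, Matrix.diag, Fintype.sum_prod_type, Finset.mul_sum,
    Finset.sum_mul, Fin.sum_univ_two]
  ring

lemma op2_one : op2 1 1 = (1 : Matrix Q2 Q2 ℂ) := by
  ext ⟨p1, p2⟩ ⟨q1, q2⟩
  simp [op2, Matrix.one_apply, Prod.ext_iff, ite_and]
  by_cases h1 : p1 = q1 <;> by_cases h2 : p2 = q2 <;> simp [h1, h2]

lemma qubit_facts (τ : Matrix (Fin 2) (Fin 2) ℂ) (hτ : IsDensity τ) :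
    Complex.normSq (τ 0 1) ≤ (τ 0 0).re * (τ 1 1).re ∧
    0 ≤ (τ 0 0).re ∧ 0 ≤ (τ 1 1).re ∧ (τ 0 0).re + (τ 1 1).re = 1 ∧
    (τ 0 0).im = 0 ∧ (τ 1 1).im = 0 ∧ τ 1 0 = starRingEnd ℂ (τ 0 1) := by
  obtain ⟨hP, htr⟩ := hτ
  have hherm := hP.1
  have hpsd := hP.dotProduct_mulVec_nonneg
  have h00 : (τ 0 0).im = 0 := by
    have := hherm.apply 0 0; exact Complex.conj_eq_iff_im.mp this
  have h11 : (τ 1 1).im = 0 := by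
    have := hherm.apply 1 1; exact Complex.conj_eq_iff_im.mp this
  have h10 : τ 1 0 = starRingEnd ℂ (τ 0 1) := (hherm.apply 1 0).symm
  have hr : 0 ≤ (τ 0 0).re := by
    have := hpsd ![1, 0]
    rw [Complex.le_def] at this
    have h := this.1
    simpa [dotProduct, Matrix.mulVec, Fin.sum_univ_two] using h
  have hs : 0 ≤ (τ 1 1).re := by
    have := hpsd ![0, 1]
    rw [Complex.le_def] at this
    have h := this.1
    simpa [dotProduct, Matrix.mulVec, Fin.sum_univ_two] using h
  have hsum : (τ 0 0).re + (τ 1 1).re = 1 := by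
    have : τ.trace.re = 1 := by rw [htr]; simp
    simpa [Matrix.trace, Matrix.diag, Fin.sum_univ_two] using this
  set A := (τ 0 1).re with hA
  set B := (τ 0 1).im with hB
  set r := (τ 0 0).re
  set s := (τ 1 1).re
  have hn : Complex.normSq (τ 0 1) = A * A + B * B := by
    simp [Complex.normSq_apply, hA, hB]
  set n := Complex.normSq (τ 0 1) with hnn
  have key : ∀ c : ℝ, 0 ≤ s * (c * c) + (2 * n) * c + n * r := by
    intro c
    have h2 := hpsd ![τ 0 1, (c : ℂ)]
    rw [Complex.le_def] at h2
    have h := h2.1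
    simp only [dotProduct, Matrix.mulVec, Fin.sum_univ_two, Matrix.cons_val_zero,
      Matrix.cons_val_one, Matrix.head_cons, Pi.star_apply, RCLike.star_def, h10] at h
    simp only [Complex.add_re, Complex.mul_re, Complex.conj_re, Complex.conj_im,
      Complex.ofReal_re, Complex.ofReal_im, Complex.zero_re, Complex.add_im,
      Complex.mul_im] at h
    rw [hn]
    nlinarith [h, h00, h11]
  have hd := discrim_le_zero key
  have hnneg : 0 ≤ n := Complex.normSq_nonneg _
  have hdd : (2 * n) ^ 2 - 4 * s * (n * r) ≤ 0 := by
    simpa [discrim] using hd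
  rcases eq_or_lt_of_le hnneg with h0 | h0
  · exact ⟨by rw [← h0]; positivity, hr, hs, hsum, h00, h11, h10⟩
  · refine ⟨?_, hr, hs, hsum, h00, h11, h10⟩
    nlinarith [hdd, h0]

lemma trace_pσ_im (τ : Matrix (Fin 2) (Fin 2) ℂ) (h10 : τ 1 0 = starRingEnd ℂ (τ 0 1))
    (h00 : (τ 0 0).im = 0) (h11 : (τ 1 1).im = 0) (k : Fin 3) :
    ((τ * pσ k).trace).im = 0 := by
  fin_cases k <;>
    simp [pσ, Matrix.trace, Matrix.diag, Matrix.mul_apply, Fin.sum_univ_two, h10, h00, h11,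
      Complex.add_im, Complex.mul_im]
  all_goals try ring

lemma trace_dotSigma (τ : Matrix (Fin 2) (Fin 2) ℂ) (a : Fin 3 → ℝ)
    (him : ∀ k, ((τ * pσ k).trace).im = 0) :
    (τ * dotSigma a).trace = ((∑ k, a k * ((τ * pσ k).trace).re : ℝ) : ℂ) := by
  rw [dotSigma, Finset.mul_sum]
  rw [Matrix.trace_sum]
  push_cast
  congr 1; funext k
  rw [Matrix.mul_smul, Matrix.trace_smul]
  have : (τ * pσ k).trace = (((((τ * pσ k).trace).re : ℝ)) : ℂ) := by
    apply Complex.ext <;> simp [him k]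
  rw [this]
  simp [Complex.real_smul]

lemma bloch_norm (τ : Matrix (Fin 2) (Fin 2) ℂ) (hτ : IsDensity τ) :
    ∑ k : Fin 3, (((τ * pσ k).trace).re) ^ 2 ≤ 1 := by
  obtain ⟨hn, hr, hs, hsum, h00, h11, h10⟩ := qubit_facts τ hτ
  rw [Complex.normSq_apply] at hn
  have e0 : ((τ * pσ 0).trace).re = 2 * (τ 0 1).re := by
    simp [pσ, Matrix.trace, Matrix.diag, Matrix.mul_apply, Fin.sum_univ_two, h10]
    ring
  have e1 : ((τ * pσ 1).trace).re = -2 * (τ 0 1).im := by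
    simp [pσ, Matrix.trace, Matrix.diag, Matrix.mul_apply, Fin.sum_univ_two, h10,
      Complex.mul_re]
    ring
  have e2 : ((τ * pσ 2).trace).re = (τ 0 0).re - (τ 1 1).re := by
    simp [pσ, Matrix.trace, Matrix.diag, Matrix.mul_apply, Fin.sum_univ_two]
    ring
  rw [Fin.sum_univ_three, e0, e1, e2]
  nlinarith [hn, hr, hs, hsum]

lemma col_ortho (a : Fin 3 → Fin 3 → ℝ)
    (ha : ∀ i j, (∑ k, a i k * a j k) = if i = j then 1 else 0) :
    ∀ k l, (∑ i, a i k * a i l) = if k = l then 1 else 0 := by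
  set M : Matrix (Fin 3) (Fin 3) ℝ := Matrix.of a with hMdef
  have hM : M * M.transpose = 1 := by
    ext i j
    simpa [hMdef, Matrix.mul_apply, Matrix.one_apply] using ha i j
  have hM' : M.transpose * M = 1 := mul_eq_one_comm.mp hM
  intro k l
  have := congrFun (congrFun hM' k) l
  simpa [hMdef, Matrix.mul_apply, Matrix.one_apply, mul_comm] using this

lemma sum_rotate (a : Fin 3 → Fin 3 → ℝ)
    (hcol : ∀ k l, (∑ i, a i k * a i l) = if k = l then 1 else 0)
    (w : Fin 3 → ℝ) :
    ∑ i, (∑ k, a i k * w k) ^ 2 = ∑ k, (w k) ^ 2 := by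
  have h1 : ∀ i : Fin 3, (∑ k, a i k * w k) ^ 2
      = ∑ k, ∑ l, (a i k * a i l) * (w k * w l) := by
    intro i
    rw [sq, Finset.sum_mul_sum]
    congr 1; funext k; congr 1; funext l; ring
  simp only [h1]
  rw [Finset.sum_comm]
  have h2 : ∀ k : Fin 3, ∑ i, ∑ l, (a i k * a i l) * (w k * w l)
      = ∑ l, (∑ i, a i k * a i l) * (w k * w l) := by
    intro k
    rw [Finset.sum_comm]
    congr 1; funext l; rw [Finset.sum_mul]
  simp only [h2, hcol]
  simp [ite_mul, sq]

lemma cone_sum {N : ℕ} (p x y z : Fin N → ℝ) (hp : ∀ k, 0 ≤ p k)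
    (hx : ∀ k, 0 ≤ x k) (hyz : ∀ k, (y k) ^ 2 + (z k) ^ 2 ≤ (x k) ^ 2) :
    0 ≤ (∑ k, p k * x k) ^ 2 - (∑ k, p k * y k) ^ 2 - (∑ k, p k * z k) ^ 2 := by
  set c : Fin N → ℂ := fun k => ((p k * y k : ℝ) : ℂ) + ((p k * z k : ℝ) : ℂ) * Complex.I
    with hc
  have habs : ‖∑ k, c k‖ ≤ ∑ k, p k * x k := by
    refine le_trans (norm_sum_le _ _) (Finset.sum_le_sum fun k _ => ?_)
    rw [hc]
    simp only
    rw [Complex.norm_def, Complex.normSq_add_mul_I]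
    have h1 : (p k * y k) ^ 2 + (p k * z k) ^ 2 ≤ (p k * x k) ^ 2 := by
      have := hyz k
      nlinarith [sq_nonneg (p k)]
    calc Real.sqrt ((p k * y k) ^ 2 + (p k * z k) ^ 2)
        ≤ Real.sqrt ((p k * x k) ^ 2) := Real.sqrt_le_sqrt h1
      _ = p k * x k := Real.sqrt_sq (mul_nonneg (hp k) (hx k))
  have hre : (∑ k, c k).re = ∑ k, p k * y k := by
    rw [Complex.re_sum]
    congr 1; funext k; simp [hc]
  have him : (∑ k, c k).im = ∑ k, p k * z k := by
    rw [Complex.im_sum]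
    congr 1; funext k; simp [hc]
  have h2 : (∑ k, p k * y k) ^ 2 + (∑ k, p k * z k) ^ 2 ≤ (∑ k, p k * x k) ^ 2 := by
    have := pow_le_pow_left₀ (norm_nonneg _) habs 2
    rw [Complex.sq_norm, Complex.normSq_apply, hre, him] at this
    nlinarith [this]
  linarith

lemma expec_add (ρ X Y : Matrix Q2 Q2 ℂ) :
    expec ρ (X + Y) = expec ρ X + expec ρ Y := by
  unfold expec
  rw [mul_add, Matrix.trace_add]
  simp

lemma trace_sep_mul {N : ℕ} (p : Fin N → ℝ) (ρ1 ρ2 : Fin N → Matrix (Fin 2) (Fin 2) ℂ)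
    (X Y : Matrix (Fin 2) (Fin 2) ℂ) :
    expec (∑ k, p k • op2 (ρ1 k) (ρ2 k)) (op2 X Y)
      = ∑ k, p k * ((ρ1 k * X).trace * (ρ2 k * Y).trace).re := by
  unfold expec
  rw [Finset.sum_mul]
  simp only [smul_mul_assoc, op2_mul]
  rw [Matrix.trace_sum, Complex.re_sum]
  congr 1; funext k
  rw [Matrix.trace_smul, op2_trace]
  simp [Complex.real_smul]

theorem stmt14 (ρ : Matrix Q2 Q2 ℂ) (hρ : IsDensity ρ) (hsep : SepState ρ)
    (a b : Fin 3 → Fin 3 → ℝ) (ha : RightHandedONB a) (hb : RightHandedONB b) :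
    0 ≤ expec ρ (1 + op2 (dotSigma (a 2)) (dotSigma (b 2))) ^ 2
      - expec ρ (op2 (dotSigma (a 2)) 1 + op2 1 (dotSigma (b 2))) ^ 2
      - expec ρ (op2 (dotSigma (a 0)) (dotSigma (b 0))
          + op2 (dotSigma (a 1)) (dotSigma (b 1))) ^ 2 := by
  obtain ⟨N, p, ρ1, ρ2, hp, hpsum, hd1, hd2, hρeq⟩ := hsep
  subst hρeq
  -- Bloch vectors
  set u : Fin N → Fin 3 → ℝ := fun k i => ∑ m, a i m * ((ρ1 k * pσ m).trace).re with hu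
  set v : Fin N → Fin 3 → ℝ := fun k i => ∑ m, b i m * ((ρ2 k * pσ m).trace).re with hv
  have him1 : ∀ k m, ((ρ1 k * pσ m).trace).im = 0 := by
    intro k m
    obtain ⟨-, -, -, -, h00, h11, h10⟩ := qubit_facts (ρ1 k) (hd1 k)
    exact trace_pσ_im _ h10 h00 h11 m
  have him2 : ∀ k m, ((ρ2 k * pσ m).trace).im = 0 := by
    intro k m
    obtain ⟨-, -, -, -, h00, h11, h10⟩ := qubit_facts (ρ2 k) (hd2 k)
    exact trace_pσ_im _ h10 h00 h11 m
  have htr1 : ∀ k i, (ρ1 k * dotSigma (a i)).trace = ((u k i : ℝ) : ℂ) := by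
    intro k i; exact trace_dotSigma _ _ (him1 k)
  have htr2 : ∀ k i, (ρ2 k * dotSigma (b i)).trace = ((v k i : ℝ) : ℂ) := by
    intro k i; exact trace_dotSigma _ _ (him2 k)
  have hnu : ∀ k, ∑ i, (u k i) ^ 2 ≤ 1 := by
    intro k
    rw [hu]
    simp only
    rw [sum_rotate a (col_ortho a ha.1)]
    exact bloch_norm _ (hd1 k)
  have hnv : ∀ k, ∑ i, (v k i) ^ 2 ≤ 1 := by
    intro k
    rw [hv]
    simp only
    rw [sum_rotate b (col_ortho b hb.1)]
    exact bloch_norm _ (hd2 k)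
  -- compute the three expectations
  set S := ∑ k, p k • op2 (ρ1 k) (ρ2 k) with hS
  have hE1 : expec S (1 + op2 (dotSigma (a 2)) (dotSigma (b 2)))
      = ∑ k, p k * (1 + u k 2 * v k 2) := by
    rw [expec_add, ← op2_one, trace_sep_mul, trace_sep_mul]
    rw [← Finset.sum_add_distrib]
    congr 1; funext k
    rw [mul_one, mul_one, (hd1 k).2, (hd2 k).2, htr1, htr2]
    push_cast
    simp [mul_add]
  have hE2 : expec S (op2 (dotSigma (a 2)) 1 + op2 1 (dotSigma (b 2)))
      = ∑ k, p k * (u k 2 + v k 2) := by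
    rw [expec_add, trace_sep_mul, trace_sep_mul]
    rw [← Finset.sum_add_distrib]
    congr 1; funext k
    rw [Matrix.mul_one, Matrix.mul_one, (hd1 k).2, (hd2 k).2, htr1, htr2]
    push_cast
    simp [mul_add]
  have hE3 : expec S (op2 (dotSigma (a 0)) (dotSigma (b 0))
        + op2 (dotSigma (a 1)) (dotSigma (b 1)))
      = ∑ k, p k * (u k 0 * v k 0 + u k 1 * v k 1) := by
    rw [expec_add, trace_sep_mul, trace_sep_mul]
    rw [← Finset.sum_add_distrib]
    congr 1; funext k
    rw [htr1, htr2, htr1, htr2]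
    push_cast
    simp [mul_add]
  rw [hE1, hE2, hE3]
  apply cone_sum _ _ _ _ hp
  · intro k
    have h2 : (u k 2) ^ 2 ≤ 1 := by
      have := hnu k; rw [Fin.sum_univ_three] at this; nlinarith [sq_nonneg (u k 0), sq_nonneg (u k 1)]
    have h3 : (v k 2) ^ 2 ≤ 1 := by
      have := hnv k; rw [Fin.sum_univ_three] at this; nlinarith [sq_nonneg (v k 0), sq_nonneg (v k 1)]
    nlinarith [sq_nonneg (u k 2 + v k 2), sq_nonneg (u k 2 - v k 2)]
  · intro k
    have hu3 := hnu k
    have hv3 := hnv k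
    rw [Fin.sum_univ_three] at hu3 hv3
    have h1 : (u k 0) ^ 2 + (u k 1) ^ 2 ≤ 1 - (u k 2) ^ 2 := by linarith
    have h2 : (v k 0) ^ 2 + (v k 1) ^ 2 ≤ 1 - (v k 2) ^ 2 := by linarith
    have hm : ((u k 0) ^ 2 + (u k 1) ^ 2) * ((v k 0) ^ 2 + (v k 1) ^ 2)
        ≤ (1 - (u k 2) ^ 2) * (1 - (v k 2) ^ 2) := by
      apply mul_le_mul h1 h2 (by positivity)
      nlinarith [sq_nonneg (u k 0), sq_nonneg (u k 1)]
    nlinarith [hm, sq_nonneg (u k 0 * v k 1 - u k 1 * v k 0)]
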